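/- Let (x_n) be a sequence in F_α with sup_n ‖x_n‖_{F_α} ≤ K for some K ≥ 0, and let x ∈ X be such that p(x_n − x) → 0 for every p ∈ 𝒫. Then x ∈ F_α and ‖x‖_{F_α} ≤ K (the Favard norm is sequentially lower semicontinuous for the topology τ on norm-bounded sets). -/

import Mathlib

open scoped Topology

/-- The Favard norm `‖·‖_{F_α}` is sequentially lower semicontinuous
for the locally convex topology `τ` on norm-bounded sets: if `(x_n) ⊆ F_α` with
`‖x_n‖_{F_α} ≤ K` and `p(x_n − x) → 0` for every `p ∈ 𝒫`, then `x ∈ F_α` and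
`‖x‖_{F_α} ≤ K`. -/
theorem statement8
    {X : Type*} [NormedAddCommGroup X] [NormedSpace ℝ X] [CompleteSpace X]
    (P : Set (Seminorm ℝ X))
    (hnorm : ∀ x : X, ‖x‖ = sSup {r : ℝ | ∃ p ∈ P, r = p x})
    (hcomplete : ∀ (u : ℕ → X) (C : ℝ), (∀ n, ‖u n‖ ≤ C) →
      (∀ p ∈ P, ∀ ε > (0:ℝ), ∃ N : ℕ, ∀ m ≥ N, ∀ n ≥ N, p (u m - u n) < ε) →
      ∃ x : X, ∀ p ∈ P, Filter.Tendsto (fun n => p (u n - x)) Filter.atTop (𝓝 0))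
    (T : ℝ → X →L[ℝ] X) (hT0 : T 0 = 1)
    (hTsg : ∀ s t : ℝ, 0 ≤ s → 0 ≤ t → T (t + s) = (T t).comp (T s))
    (M ω : ℝ) (hM : 1 ≤ M) (hω : ω < 0)
    (hgrowth : ∀ t : ℝ, 0 ≤ t → ‖T t‖ ≤ M * Real.exp (ω * t))
    (horbit : ∀ x : X, ∀ p ∈ P, ∀ t₀ : ℝ, 0 ≤ t₀ →
      Filter.Tendsto (fun t : ℝ => p (T t x - T t₀ x)) (𝓝[Set.Ici 0] t₀) (𝓝 0))
    (hbieq : ∀ (u : ℕ → X) (C : ℝ), (∀ n, ‖u n‖ ≤ C) →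
      (∀ p ∈ P, Filter.Tendsto (fun n => p (u n)) Filter.atTop (𝓝 0)) →
      ∀ t₀ > (0:ℝ), ∀ p ∈ P, ∀ ε > (0:ℝ), ∃ N : ℕ, ∀ n ≥ N, ∀ s ∈ Set.Icc (0:ℝ) t₀,
        p (T s (u n)) < ε)
    (α : ℝ) (hα : α ∈ Set.Ioo (0:ℝ) 1)
    (K : ℝ) (hK : 0 ≤ K) (u : ℕ → X)
    (huF : ∀ n, ∀ t > (0:ℝ), ‖T t (u n) - u n‖ / t ^ α ≤ K)
    (x : X)
    (hconv : ∀ p ∈ P, Filter.Tendsto (fun n => p (u n - x)) Filter.atTop (𝓝 0)) :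
    ∀ t > (0:ℝ), ‖T t x - x‖ / t ^ α ≤ K := by
  have hple : ∀ p ∈ P, ∀ y : X, p y ≤ ‖y‖ := by
    intro p hp y
    by_cases hb : BddAbove {r : ℝ | ∃ q ∈ P, r = q y}
    · rw [hnorm]; exact le_csSup hb ⟨p, hp, rfl⟩
    · have h0 : ‖y‖ = 0 := by rw [hnorm]; exact Real.sSup_of_not_bddAbove hb
      have hy : y = 0 := norm_eq_zero.mp h0
      simp [hy]
  have hω' : (0:ℝ) < -ω := by linarith
  set t₁ : ℝ := Real.log (2 * M) / (-ω) with ht₁def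
  have ht₁ : 0 < t₁ := div_pos (Real.log_pos (by linarith)) hω'
  have h2M : (0:ℝ) < 2 * M := by linarith
  have key : M * Real.exp (ω * t₁) = 1 / 2 := by
    have h1 : ω * t₁ = -Real.log (2 * M) := by
      rw [ht₁def, mul_div_assoc', div_neg, mul_div_cancel_left₀ _ hω.ne]
    rw [h1, Real.exp_neg, Real.exp_log h2M]
    field_simp
  have ht₁α : (0:ℝ) < t₁ ^ α := Real.rpow_pos_of_pos ht₁ α
  -- uniform norm bound on u n
  have hub : ∀ n, ‖u n‖ ≤ 2 * (K * t₁ ^ α) := by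
    intro n
    have h1 : ‖T t₁ (u n)‖ ≤ (1 / 2) * ‖u n‖ := by
      calc ‖T t₁ (u n)‖ ≤ ‖T t₁‖ * ‖u n‖ := (T t₁).le_opNorm _
        _ ≤ (M * Real.exp (ω * t₁)) * ‖u n‖ :=
            mul_le_mul_of_nonneg_right (hgrowth t₁ ht₁.le) (norm_nonneg _)
        _ = (1 / 2) * ‖u n‖ := by rw [key]
    have h2 : ‖T t₁ (u n) - u n‖ ≤ K * t₁ ^ α :=
      (div_le_iff₀ ht₁α).mp (huF n t₁ ht₁)
    have h3 : ‖u n‖ ≤ ‖T t₁ (u n) - u n‖ + ‖T t₁ (u n)‖ := by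
      have := norm_sub_le (T t₁ (u n) - u n) (T t₁ (u n))
      simpa using this
    linarith
  set C : ℝ := 2 * (K * t₁ ^ α) + ‖x‖ with hCdef
  have hub' : ∀ n, ‖u n - x‖ ≤ C := by
    intro n
    calc ‖u n - x‖ ≤ ‖u n‖ + ‖x‖ := norm_sub_le _ _
      _ ≤ C := by have := hub n; rw [hCdef]; linarith
  intro t ht
  have htα : (0:ℝ) < t ^ α := Real.rpow_pos_of_pos ht α
  rw [div_le_iff₀ htα, hnorm]
  apply Real.sSup_le
  · rintro r ⟨p, hp, rfl⟩
    refine le_of_forall_pos_le_add ?_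
    intro ε hε
    obtain ⟨N₁, hN₁⟩ := hbieq (fun n => u n - x) C hub' hconv t ht p hp (ε / 2) (by linarith)
    obtain ⟨N₂, hN₂⟩ := (Filter.eventually_atTop).mp
      ((hconv p hp).eventually_lt_const (show (0:ℝ) < ε / 2 by linarith))
    set n := max N₁ N₂
    have hA : p (T t (u n - x)) < ε / 2 :=
      hN₁ n (le_max_left _ _) t ⟨le_of_lt ht, le_refl t⟩
    have hB : p (u n - x) < ε / 2 := hN₂ n (le_max_right _ _)
    have hsplit : T t x - x = -(T t (u n - x)) + (T t (u n) - u n) + (u n - x) := by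
      have h := map_sub (T t) (u n) x
      rw [h]; abel
    calc p (T t x - x) ≤ p (-(T t (u n - x)) + (T t (u n) - u n)) + p (u n - x) := by
          rw [hsplit]; exact map_add_le_add p _ _
      _ ≤ p (-(T t (u n - x))) + p (T t (u n) - u n) + p (u n - x) := by
          have := map_add_le_add p (-(T t (u n - x))) (T t (u n) - u n)
          linarith
      _ = p (T t (u n - x)) + p (T t (u n) - u n) + p (u n - x) := by
          rw [map_neg_eq_map]
      _ ≤ ε / 2 + K * t ^ α + ε / 2 := by
          have h2 : p (T t (u n) - u n) ≤ K * t ^ α := by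
            refine le_trans (hple p hp _) ?_
            exact (div_le_iff₀ htα).mp (huF n t ht)
          linarith
      _ = K * t ^ α + ε := by ring
  · positivity
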